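/- Let r ≥ 4, let C be the Cartan matrix of type D_r, and let 2 ≤ ℓ ≤ r−2. If ℓ is even, set t = ℓ/2 and for 1 ≤ i ≤ t let Δ_i ∈ ℚ^r be the unique solution of C·Δ_i = e_ℓ − e_{2(i−1)} (with e_0 := 0); if ℓ is odd, set t = (ℓ−1)/2 and for 1 ≤ i ≤ t let Δ_i be the unique solution of C·Δ_i = e_ℓ − e_{2i−1}. Then each Δ_i lies in ℕ^r, Δ_1 ≻ Δ_2 ≻ ⋯ ≻ Δ_t, this path-type for ℓ is admissible, and g(Δ_1⋯Δ_t) = t = ⌊ℓ/2⌋. -/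

import Mathlib

open Finset

/-- The `ℓ`-th standard basis vector of `ℚ^r`. -/
def eVecQ {r : ℕ} (ℓ : Fin r) : Fin r → ℚ := fun k => if k = ℓ then 1 else 0

/-- `Δ` provides `ω_k`: the `k`-th coordinate of `e_ℓ − C·Δ` is positive. -/
def ProvidesQ {r : ℕ} (C : Matrix (Fin r) (Fin r) ℚ) (ℓ : Fin r) (Δ : Fin r → ℚ)
    (k : Fin r) : Prop :=
  0 < eVecQ ℓ k - ∑ j, C k j * Δ j

instance {r : ℕ} (C : Matrix (Fin r) (Fin r) ℚ) (ℓ : Fin r) (Δ : Fin r → ℚ) (k : Fin r) :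
    Decidable (ProvidesQ C ℓ Δ k) := by unfold ProvidesQ; infer_instance

/-- `Δ` requires `ω_k`: the `k`-th coordinate of `e_ℓ − C·Δ` is negative. -/
def RequiresQ {r : ℕ} (C : Matrix (Fin r) (Fin r) ℚ) (ℓ : Fin r) (Δ : Fin r → ℚ)
    (k : Fin r) : Prop :=
  eVecQ ℓ k - ∑ j, C k j * Δ j < 0

/-- A path-type: a finite strictly decreasing sequence of nonzero vectors with nonnegative
coordinates (i.e. lying in `ℕ^r`). -/
def IsPathTypeQ {r : ℕ} (Δs : List (Fin r → ℚ)) : Prop :=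
  (∀ Δ ∈ Δs, (∀ k, 0 ≤ Δ k) ∧ Δ ≠ 0) ∧ List.Chain' (fun x y => y < x) Δs

/-- Admissibility: every `ω_k` required by `Δ_n` is provided by some earlier `Δ_i`. -/
def AdmissibleQ {r : ℕ} (C : Matrix (Fin r) (Fin r) ℚ) (ℓ : Fin r)
    (Δs : List (Fin r → ℚ)) : Prop :=
  ∀ n, n < Δs.length → ∀ k, RequiresQ C ℓ (Δs.getD n 0) k →
    ∃ i, i < n ∧ ProvidesQ C ℓ (Δs.getD i 0) k

/-- `g(Δ_1⋯Δ_t) = t + Σ_{k : f(k) exists} Δ_{f(k)}(k)`, where `f(k)` is the least index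
providing `ω_k`. -/
def gvalQ {r : ℕ} (C : Matrix (Fin r) (Fin r) ℚ) (ℓ : Fin r) (Δs : List (Fin r → ℚ)) : ℚ :=
  (Δs.length : ℚ) + ∑ k : Fin r,
    (if h : ((Finset.range Δs.length).filter
        fun i => ProvidesQ C ℓ (Δs.getD i 0) k).Nonempty
      then Δs.getD (((Finset.range Δs.length).filter
        fun i => ProvidesQ C ℓ (Δs.getD i 0) k).min' h) 0 k
      else 0)

/-- The Cartan matrix of type `D_r` (`r ≥ 4`), with rows/columns indexed by `Fin r`
(index `i : Fin r` corresponds to the node `i+1` in 1-indexed numbering): `c_{ii} = 2`,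
`c_{ij} = −1` exactly for the unordered pairs `{i', i'+1}` with `1 ≤ i' ≤ r−2` and
`{r−2, r}` in 1-indexed numbering, and `c_{ij} = 0` otherwise. -/
def CartanD (r : ℕ) : Matrix (Fin r) (Fin r) ℤ :=
  Matrix.of fun i j =>
    if i = j then 2
    else if (i.val + 1 = j.val ∧ j.val ≤ r - 2) ∨ (j.val + 1 = i.val ∧ i.val ≤ r - 2) ∨
        (i.val = r - 3 ∧ j.val = r - 1) ∨ (j.val = r - 3 ∧ i.val = r - 1) then -1
    else 0

lemma sum_ite_single {r : ℕ} (z : Fin r → ℚ) (P : Fin r → Prop) [DecidablePred P] (a : Fin r)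
    (h : ∀ j, P j ↔ j = a) : (∑ j, if P j then z j else 0) = z a := by
  rw [Finset.sum_congr rfl fun j _ => if_congr (h j) rfl rfl]
  simp

lemma sum_ite_none {r : ℕ} (z : Fin r → ℚ) (P : Fin r → Prop) [DecidablePred P]
    (h : ∀ j, ¬ P j) : (∑ j, if P j then z j else 0) = 0 := by
  rw [Finset.sum_congr rfl fun j _ => if_neg (h j)]
  simp

lemma cartan_entry {r : ℕ} (hr : 4 ≤ r) (k j : Fin r) :
    ((CartanD r).map (fun z : ℤ => (z : ℚ))) k j =
      2 * (if j = k then 1 else 0)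
        - (if j.val + 1 = k.val ∧ k.val ≤ r - 2 then 1 else 0)
        - (if k.val + 1 = j.val ∧ j.val ≤ r - 2 then 1 else 0)
        - (if k.val = r - 3 ∧ j.val = r - 1 then 1 else 0)
        - (if j.val = r - 3 ∧ k.val = r - 1 then 1 else 0) := by
  simp only [CartanD, Matrix.map_apply, Matrix.of_apply, Fin.ext_iff]
  have hk := k.isLt
  have hj := j.isLt
  split_ifs <;> first | omega | norm_num

lemma rowCartan {r : ℕ} (hr : 4 ≤ r) (z : Fin r → ℚ) (k : Fin r) :
    ∑ j, ((CartanD r).map (fun z : ℤ => (z : ℚ))) k j * z j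
      = 2 * z k
        - (if h : 1 ≤ k.val ∧ k.val ≤ r - 2 then z ⟨k.val - 1, by have := k.isLt; omega⟩ else 0)
        - (if h : k.val + 1 ≤ r - 2 then z ⟨k.val + 1, by omega⟩ else 0)
        - (if k.val = r - 3 then z ⟨r - 1, by omega⟩ else 0)
        - (if k.val = r - 1 then z ⟨r - 3, by omega⟩ else 0) := by
  have hk := k.isLt
  have hstep : ∀ j : Fin r, ((CartanD r).map (fun z : ℤ => (z : ℚ))) k j * z j
      = 2 * (if j = k then z j else 0)
        - (if j.val + 1 = k.val ∧ k.val ≤ r - 2 then z j else 0)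
        - (if k.val + 1 = j.val ∧ j.val ≤ r - 2 then z j else 0)
        - (if k.val = r - 3 ∧ j.val = r - 1 then z j else 0)
        - (if j.val = r - 3 ∧ k.val = r - 1 then z j else 0) := by
    intro j
    rw [cartan_entry hr]
    split_ifs <;> ring
  rw [Finset.sum_congr rfl fun j _ => hstep j]
  have hA : (∑ j : Fin r, if j = k then z j else 0) = z k :=
    sum_ite_single z _ k fun j => Iff.rfl
  have hB : (∑ j : Fin r, if j.val + 1 = k.val ∧ k.val ≤ r - 2 then z j else 0)
      = (if h : 1 ≤ k.val ∧ k.val ≤ r - 2 then z ⟨k.val - 1, by omega⟩ else 0) := by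
    by_cases hc : 1 ≤ k.val ∧ k.val ≤ r - 2
    · rw [dif_pos hc]
      exact sum_ite_single z _ ⟨k.val - 1, by omega⟩ fun j => by
        rw [Fin.ext_iff]; simp only []; omega
    · rw [dif_neg hc]
      exact sum_ite_none z _ fun j => by omega
  have hC : (∑ j : Fin r, if k.val + 1 = j.val ∧ j.val ≤ r - 2 then z j else 0)
      = (if h : k.val + 1 ≤ r - 2 then z ⟨k.val + 1, by omega⟩ else 0) := by
    by_cases hc : k.val + 1 ≤ r - 2
    · rw [dif_pos hc]
      exact sum_ite_single z _ ⟨k.val + 1, by omega⟩ fun j => by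
        rw [Fin.ext_iff]; simp only []; omega
    · rw [dif_neg hc]
      exact sum_ite_none z _ fun j => by have := j.isLt; omega
  have hD : (∑ j : Fin r, if k.val = r - 3 ∧ j.val = r - 1 then z j else 0)
      = (if k.val = r - 3 then z ⟨r - 1, by omega⟩ else 0) := by
    by_cases hc : k.val = r - 3
    · rw [if_pos hc]
      exact sum_ite_single z _ ⟨r - 1, by omega⟩ fun j => by
        rw [Fin.ext_iff]; simp only []; omega
    · rw [if_neg hc]
      exact sum_ite_none z _ fun j => by omega
  have hE : (∑ j : Fin r, if j.val = r - 3 ∧ k.val = r - 1 then z j else 0)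
      = (if k.val = r - 1 then z ⟨r - 3, by omega⟩ else 0) := by
    by_cases hc : k.val = r - 1
    · rw [if_pos hc]
      exact sum_ite_single z _ ⟨r - 3, by omega⟩ fun j => by
        rw [Fin.ext_iff]; simp only []; omega
    · rw [if_neg hc]
      exact sum_ite_none z _ fun j => by omega
  rw [Finset.sum_sub_distrib, Finset.sum_sub_distrib, Finset.sum_sub_distrib,
    Finset.sum_sub_distrib, ← Finset.mul_sum, hA, hB, hC, hD, hE]

set_option maxHeartbeats 2000000 in
lemma cartan_ker {r : ℕ} (hr : 4 ≤ r) (z : Fin r → ℚ)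
    (hz : ∀ k : Fin r, ∑ j, ((CartanD r).map (fun z : ℤ => (z : ℚ))) k j * z j = 0) :
    z = 0 := by
  have row : ∀ k : Fin r, 2 * z k
        - (if h : 1 ≤ k.val ∧ k.val ≤ r - 2 then z ⟨k.val - 1, by have := k.isLt; omega⟩ else 0)
        - (if h : k.val + 1 ≤ r - 2 then z ⟨k.val + 1, by omega⟩ else 0)
        - (if k.val = r - 3 then z ⟨r - 1, by omega⟩ else 0)
        - (if k.val = r - 1 then z ⟨r - 3, by omega⟩ else 0) = 0 := fun k =>
    (rowCartan hr z k).symm.trans (hz k)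
  have key : ∀ n : ℕ, n ≤ r - 3 → ∀ hn : n < r, z ⟨n, hn⟩ = (n + 1 : ℚ) * z ⟨0, by omega⟩ := by
    intro n
    induction n using Nat.strong_induction_on with
    | _ n ih =>
      match n with
      | 0 => intro _ hn; norm_num
      | 1 =>
        intro h1 hn
        have h0 := row ⟨0, by omega⟩
        rw [dif_neg (by simp only [Fin.val_mk]; omega), dif_pos (by simp only [Fin.val_mk]; omega),
          if_neg (by simp only [Fin.val_mk]; omega), if_neg (by simp only [Fin.val_mk]; omega)] at h0
        simp only [Fin.val_mk] at h0
        push_cast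
        linarith
      | (m+2) =>
        intro hle hn
        have h1 := row ⟨m+1, by omega⟩
        rw [dif_pos (by simp only [Fin.val_mk]; omega), dif_pos (by simp only [Fin.val_mk]; omega),
          if_neg (by simp only [Fin.val_mk]; omega), if_neg (by simp only [Fin.val_mk]; omega)] at h1
        simp only [Fin.val_mk, Nat.add_sub_cancel] at h1
        have e1 := ih m (by omega) (by omega) (by omega)
        have e2 := ih (m+1) (by omega) (by omega) (by omega)
        rw [e1, e2] at h1
        push_cast at h1 ⊢
        linarith
  have hz0 : z ⟨0, by omega⟩ = 0 := by
    have hA := row ⟨r - 2, by omega⟩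
    simp only [Fin.val_mk] at hA
    rw [dif_pos (by omega), dif_neg (by omega), if_neg (by omega), if_neg (by omega)] at hA
    have hB := row ⟨r - 1, by omega⟩
    simp only [Fin.val_mk, eq_self_iff_true, if_true] at hB
    rw [dif_neg (by omega), dif_neg (by omega), if_neg (by omega)] at hB
    have hC := row ⟨r - 3, by omega⟩
    simp only [Fin.val_mk, eq_self_iff_true, if_true] at hC
    rw [dif_pos (by omega), dif_pos (by omega), if_neg (by omega)] at hC
    have e1 : z ⟨r - 2 - 1, by omega⟩ = ((r - 2 - 1 : ℕ) + 1 : ℚ) * z ⟨0, by omega⟩ :=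
      key (r - 2 - 1) (by omega) (by omega)
    have e2 : z ⟨r - 3 - 1, by omega⟩ = ((r - 3 - 1 : ℕ) + 1 : ℚ) * z ⟨0, by omega⟩ :=
      key (r - 3 - 1) (by omega) (by omega)
    have e3 : z ⟨r - 3, by omega⟩ = ((r - 3 : ℕ) + 1 : ℚ) * z ⟨0, by omega⟩ :=
      key (r - 3) (by omega) (by omega)
    have hfin : (⟨r - 3 + 1, by omega⟩ : Fin r) = ⟨r - 2, by omega⟩ := by
      apply Fin.ext; simp only [Fin.val_mk]; omega
    rw [hfin] at hC
    rw [e1] at hA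
    rw [e2, e3] at hC
    rw [e3] at hB
    have c1 : ((r - 2 - 1 : ℕ) : ℚ) = (r : ℚ) - 3 := by
      have h := congrArg (fun n : ℕ => (n : ℚ)) (show (r - 2 - 1 : ℕ) + 3 = r by omega)
      push_cast at h; linarith
    have c2 : ((r - 3 - 1 : ℕ) : ℚ) = (r : ℚ) - 4 := by
      have h := congrArg (fun n : ℕ => (n : ℚ)) (show (r - 3 - 1 : ℕ) + 4 = r by omega)
      push_cast at h; linarith
    have c3 : ((r - 3 : ℕ) : ℚ) = (r : ℚ) - 3 := by
      have h := congrArg (fun n : ℕ => (n : ℚ)) (show (r - 3 : ℕ) + 3 = r by omega)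
      push_cast at h; linarith
    rw [c1] at hA
    rw [c2, c3] at hC
    rw [c3] at hB
    have hr4 : (4:ℚ) ≤ (r:ℚ) := by exact_mod_cast hr
    linarith [hA, hB, hC]
  funext k
  have hk := k.isLt
  simp only [Pi.zero_apply]
  by_cases hc : k.val ≤ r - 3
  · have := key k.val hc k.isLt
    rw [hz0] at this
    simpa using this
  · by_cases hc2 : k.val = r - 2
    · have hA := row ⟨r - 2, by omega⟩
      simp only [Fin.val_mk] at hA
      rw [dif_pos (by omega), dif_neg (by omega), if_neg (by omega), if_neg (by omega)] at hA
      have e1 : z ⟨r - 2 - 1, by omega⟩ = ((r - 2 - 1 : ℕ) + 1 : ℚ) * z ⟨0, by omega⟩ :=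
        key (r - 2 - 1) (by omega) (by omega)
      rw [e1, hz0] at hA
      have hkk : k = ⟨r - 2, by omega⟩ := by rw [Fin.ext_iff]; exact hc2
      rw [hkk]
      linarith
    · have hc3 : k.val = r - 1 := by omega
      have hB := row ⟨r - 1, by omega⟩
      simp only [Fin.val_mk, eq_self_iff_true, if_true] at hB
      rw [dif_neg (by omega), dif_neg (by omega), if_neg (by omega)] at hB
      have e3 : z ⟨r - 3, by omega⟩ = ((r - 3 : ℕ) + 1 : ℚ) * z ⟨0, by omega⟩ :=
        key (r - 3) (by omega) (by omega)
      rw [e3, hz0] at hB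
      have hkk : k = ⟨r - 1, by omega⟩ := by rw [Fin.ext_iff]; exact hc3
      rw [hkk]
      linarith

lemma cartan_inj {r : ℕ} (hr : 4 ≤ r) {x y : Fin r → ℚ}
    (h : ((CartanD r).map (fun z : ℤ => (z : ℚ))).mulVec x
       = ((CartanD r).map (fun z : ℤ => (z : ℚ))).mulVec y) : x = y := by
  have h0 : ((CartanD r).map (fun z : ℤ => (z : ℚ))).mulVec (x - y) = 0 := by
    rw [Matrix.mulVec_sub, h, sub_self]
  have := cartan_ker hr (x - y) (fun k => by
    have := congrFun h0 k
    exact this)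
  exact sub_eq_zero.mp this

def deltaD (r L m : ℕ) : Fin r → ℚ := fun k =>
  if k.val + 3 ≤ r then ((min (k.val + 1) L : ℕ) : ℚ) - ((min (k.val + 1) m : ℕ) : ℚ)
  else (((L : ℕ) : ℚ) - ((m : ℕ) : ℚ)) / 2

lemma mulVec_deltaD {r : ℕ} (hr : 4 ≤ r) (L m : ℕ) (hL2 : 2 ≤ L) (hLr : L ≤ r - 2)
    (hm : m + 2 ≤ L) :
    ((CartanD r).map (fun z : ℤ => (z : ℚ))).mulVec (deltaD r L m)
      = fun k => (if k.val + 1 = L then 1 else 0) - (if k.val + 1 = m then 1 else 0) := by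
  funext k
  have hk := k.isLt
  have hrow : ((CartanD r).map (fun z : ℤ => (z : ℚ))).mulVec (deltaD r L m) k
      = ∑ j, ((CartanD r).map (fun z : ℤ => (z : ℚ))) k j * deltaD r L m j := rfl
  rw [hrow, rowCartan hr]
  by_cases hc1 : k.val = 0
  · rw [dif_neg (by omega), dif_pos (by omega), if_neg (by omega), if_neg (by omega)]
    simp only [deltaD, Fin.val_mk, hc1]
    rw [if_pos (by omega), if_pos (by omega)]
    have h1 : min (0+1) L = 1 ∧ min (0+1+1) L = 2 := by omega
    by_cases hm1 : m = 1
    · rw [if_neg (by omega), if_pos (by omega)]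
      have h2 : min (0+1) m = 1 ∧ min (0+1+1) m = 1 := by omega
      rw [h1.1, h1.2, h2.1, h2.2]; norm_num
    · rw [if_neg (by omega), if_neg (by omega)]
      have h2' : min (0+1+1) m = 2 * min (0+1) m := by omega
      have : ((min (0+1+1) m : ℕ) : ℚ) = ((2 * min (0+1) m : ℕ) : ℚ) := by rw [h2']
      push_cast at this
      rw [h1.1, h1.2]
      push_cast
      linarith
  by_cases hc2 : 1 ≤ k.val ∧ k.val ≤ r - 4
  · rw [dif_pos (by omega), dif_pos (by omega), if_neg (by omega), if_neg (by omega)]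
    simp only [deltaD, Fin.val_mk]
    rw [if_pos (by omega), if_pos (by omega), if_pos (by omega)]
    have i1 : min (k.val-1+1) L + min (k.val+1+1) L + (if k.val+1 = L then 1 else 0)
        = 2 * min (k.val+1) L := by split_ifs <;> omega
    have i2 : min (k.val-1+1) m + min (k.val+1+1) m + (if k.val+1 = m then 1 else 0)
        = 2 * min (k.val+1) m := by split_ifs <;> omega
    by_cases hL : k.val + 1 = L
    · rw [if_pos hL, if_neg (by omega)]
      rw [if_pos hL] at i1
      rw [if_neg (by omega)] at i2
      have c1 : ((min (k.val-1+1) L + min (k.val+1+1) L + 1 : ℕ) : ℚ)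
          = ((2 * min (k.val+1) L : ℕ) : ℚ) := by rw [← i1]
      have c2 : ((min (k.val-1+1) m + min (k.val+1+1) m : ℕ) : ℚ)
          = ((2 * min (k.val+1) m : ℕ) : ℚ) := by rw [← i2]; push_cast; ring
      push_cast at c1 c2 ⊢
      linarith
    · rw [if_neg hL]
      rw [if_neg hL] at i1
      by_cases hm2 : k.val + 1 = m
      · rw [if_pos hm2]
        rw [if_pos hm2] at i2
        have c1 : ((min (k.val-1+1) L + min (k.val+1+1) L : ℕ) : ℚ)
            = ((2 * min (k.val+1) L : ℕ) : ℚ) := by rw [← i1]; push_cast; ring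
        have c2 : ((min (k.val-1+1) m + min (k.val+1+1) m + 1 : ℕ) : ℚ)
            = ((2 * min (k.val+1) m : ℕ) : ℚ) := by rw [← i2]
        push_cast at c1 c2 ⊢
        linarith
      · rw [if_neg hm2]
        rw [if_neg hm2] at i2
        have c1 : ((min (k.val-1+1) L + min (k.val+1+1) L : ℕ) : ℚ)
            = ((2 * min (k.val+1) L : ℕ) : ℚ) := by rw [← i1]; push_cast; ring
        have c2 : ((min (k.val-1+1) m + min (k.val+1+1) m : ℕ) : ℚ)
            = ((2 * min (k.val+1) m : ℕ) : ℚ) := by rw [← i2]; push_cast; ring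
        push_cast at c1 c2 ⊢
        linarith
  by_cases hc3 : k.val = r - 3
  · rw [dif_pos (by omega), dif_pos (by omega), if_pos hc3, if_neg (by omega)]
    simp only [deltaD, Fin.val_mk, hc3]
    rw [if_pos (by omega), if_pos (by omega), if_neg (by omega), if_neg (by omega)]
    rw [if_neg (show ¬(r - 3 + 1 = m) by omega)]
    by_cases hL : r - 3 + 1 = L
    · rw [if_pos hL]
      have c0 : 2 * min (r-3+1) L + min (r-3-1+1) m + m
          = min (r-3-1+1) L + 2 * min (r-3+1) m + L + 1 := by omega
      have c1 : ((2 * min (r-3+1) L + min (r-3-1+1) m + m : ℕ) : ℚ)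
          = ((min (r-3-1+1) L + 2 * min (r-3+1) m + L + 1 : ℕ) : ℚ) := by exact_mod_cast c0
      push_cast at c1 ⊢
      linarith
    · rw [if_neg hL]
      have c0 : 2 * min (r-3+1) L + min (r-3-1+1) m + m
          = min (r-3-1+1) L + 2 * min (r-3+1) m + L := by omega
      have c1 : ((2 * min (r-3+1) L + min (r-3-1+1) m + m : ℕ) : ℚ)
          = ((min (r-3-1+1) L + 2 * min (r-3+1) m + L : ℕ) : ℚ) := by exact_mod_cast c0
      push_cast at c1 ⊢
      linarith
  by_cases hc4 : k.val = r - 2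
  · rw [dif_pos (by omega), dif_neg (by omega), if_neg (by omega), if_neg (by omega)]
    simp only [deltaD, Fin.val_mk, hc4]
    rw [if_neg (by omega), if_pos (by omega), if_neg (by omega), if_neg (by omega)]
    have c0 : min (r-2-1+1) L + m = min (r-2-1+1) m + L := by omega
    have c1 : ((min (r-2-1+1) L + m : ℕ) : ℚ) = ((min (r-2-1+1) m + L : ℕ) : ℚ) := by
      exact_mod_cast c0
    push_cast at c1 ⊢
    linarith
  · have hc5 : k.val = r - 1 := by omega
    rw [dif_neg (by omega), dif_neg (by omega), if_neg (by omega), if_pos hc5]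
    simp only [deltaD, Fin.val_mk, hc5]
    rw [if_neg (by omega), if_pos (by omega), if_neg (by omega), if_neg (by omega)]
    have c0 : min (r-3+1) L + m = min (r-3+1) m + L := by omega
    have c1 : ((min (r-3+1) L + m : ℕ) : ℚ) = ((min (r-3+1) m + L : ℕ) : ℚ) := by
      exact_mod_cast c0
    push_cast at c1 ⊢
    linarith

lemma getD_ofFn' {α : Type*} {t : ℕ} (f : Fin t → α) (d : α) (n : ℕ) (h : n < t) :
    (List.ofFn f).getD n d = f ⟨n, h⟩ := by
  rw [List.getD_eq_getElem?_getD, List.getElem?_ofFn]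
  simp only [List.ofFnNthVal, dif_pos h, Option.getD_some]

lemma master {r : ℕ} (hr : 4 ≤ r) (ℓ : Fin r) (h1 : 2 ≤ ℓ.val + 1) (h2 : ℓ.val + 1 ≤ r - 2)
    (t c : ℕ) (hc : c + 2 * t = ℓ.val + 1) (hc1 : c ≤ 1)
    (Δ : Fin t → (Fin r → ℚ))
    (hΔ : ∀ i, ((CartanD r).map (fun z : ℤ => (z : ℚ))).mulVec (Δ i)
      = fun k => (if k.val + 1 = ℓ.val + 1 then 1 else 0)
          - (if k.val + 1 = c + 2 * i.val then 1 else 0)) :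
    (∀ i k, ∃ n : ℕ, Δ i k = n) ∧ IsPathTypeQ (List.ofFn Δ) ∧
    AdmissibleQ ((CartanD r).map (fun z : ℤ => (z : ℚ))) ℓ (List.ofFn Δ) ∧
    gvalQ ((CartanD r).map (fun z : ℤ => (z : ℚ))) ℓ (List.ofFn Δ) = (t : ℚ) := by
  have hℓr := ℓ.isLt
  have ht1 : 1 ≤ t := by omega
  have hΔeq : ∀ i : Fin t, Δ i = deltaD r (ℓ.val + 1) (c + 2 * i.val) := by
    intro i
    have hi := i.isLt
    exact cartan_inj hr ((hΔ i).trans (mulVec_deltaD hr _ _ h1 h2 (by omega)).symm)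
  -- naturality
  have hnat : ∀ (i : Fin t) (k : Fin r), ∃ n : ℕ, Δ i k = n := by
    intro i k
    have hi := i.isLt
    have hk := k.isLt
    rw [hΔeq i]
    unfold deltaD
    by_cases hcond : k.val + 3 ≤ r
    · rw [if_pos hcond]
      refine ⟨min (k.val + 1) (ℓ.val + 1) - min (k.val + 1) (c + 2 * i.val), ?_⟩
      have hle : min (k.val + 1) (c + 2 * i.val) ≤ min (k.val + 1) (ℓ.val + 1) := by omega
      rw [Nat.cast_sub hle]
    · rw [if_neg hcond]
      refine ⟨t - i.val, ?_⟩
      have e : c + 2 * i.val + 2 * (t - i.val) = ℓ.val + 1 := by omega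
      have e' : ((c + 2 * i.val + 2 * (t - i.val) : ℕ) : ℚ) = ((ℓ.val + 1 : ℕ) : ℚ) := by
        rw [e]
      push_cast at e' ⊢
      linarith
  refine ⟨hnat, ⟨?_, ?_⟩, ?_, ?_⟩
  · -- nonneg and nonzero
    intro Δ' hΔ'
    rw [List.mem_ofFn] at hΔ'
    obtain ⟨i, rfl⟩ := hΔ'
    constructor
    · intro k
      obtain ⟨n, hn⟩ := hnat i k
      rw [hn]
      positivity
    · intro h0
      have := congrFun h0 ⟨r - 2, by omega⟩
      rw [hΔeq i] at this
      unfold deltaD at this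
      rw [if_neg (by simp only [Fin.val_mk]; omega)] at this
      simp only [Pi.zero_apply] at this
      have hi := i.isLt
      have hml : ((c + 2 * i.val : ℕ) : ℚ) + 2 ≤ ((ℓ.val + 1 : ℕ) : ℚ) := by
        exact_mod_cast (by omega : c + 2 * i.val + 2 ≤ ℓ.val + 1)
      push_cast at hml this
      linarith
  · -- chain'
    rw [List.Chain', List.isChain_iff_getElem]
    intro i hi
    simp only [List.length_ofFn] at hi
    rw [List.getElem_ofFn, List.getElem_ofFn]
    have hlt : ∀ (a b : Fin t), a.val = i → b.val = i + 1 → Δ b < Δ a := by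
      intro a b ha hb
      rw [hΔeq a, hΔeq b, Pi.lt_def]
      constructor
      · intro k
        have hk := k.isLt
        unfold deltaD
        by_cases hcond : k.val + 3 ≤ r
        · rw [if_pos hcond, if_pos hcond]
          have hle : min (k.val + 1) (c + 2 * a.val) ≤ min (k.val + 1) (c + 2 * b.val) := by
            omega
          have hle' : ((min (k.val + 1) (c + 2 * a.val) : ℕ) : ℚ)
              ≤ ((min (k.val + 1) (c + 2 * b.val) : ℕ) : ℚ) := by exact_mod_cast hle
          linarith
        · rw [if_neg hcond, if_neg hcond]
          have hle : ((c + 2 * a.val : ℕ) : ℚ) ≤ ((c + 2 * b.val : ℕ) : ℚ) := by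
            exact_mod_cast (by omega : c + 2 * a.val ≤ c + 2 * b.val)
          push_cast at hle ⊢
          linarith
      · refine ⟨⟨r - 2, by omega⟩, ?_⟩
        unfold deltaD
        rw [if_neg (by simp only [Fin.val_mk]; omega), if_neg (by simp only [Fin.val_mk]; omega)]
        have hle : ((c + 2 * a.val : ℕ) : ℚ) + 2 ≤ ((c + 2 * b.val : ℕ) : ℚ) := by
          exact_mod_cast (by omega : c + 2 * a.val + 2 ≤ c + 2 * b.val)
        push_cast at hle ⊢
        linarith
    exact hlt _ _ (by simp) (by simp)
  · -- admissibility
    intro n hn k hreq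
    exfalso
    rw [List.length_ofFn] at hn
    rw [RequiresQ, getD_ofFn' Δ 0 n hn] at hreq
    have hsum : (∑ j, ((CartanD r).map (fun z : ℤ => (z : ℚ))) k j * Δ ⟨n, hn⟩ j)
        = ((CartanD r).map (fun z : ℤ => (z : ℚ))).mulVec (Δ ⟨n, hn⟩) k := rfl
    rw [hsum, hΔ ⟨n, hn⟩] at hreq
    simp only [eVecQ] at hreq
    have hkl : (k = ℓ) ↔ (k.val + 1 = ℓ.val + 1) := by rw [Fin.ext_iff]; omega
    by_cases hke : k = ℓ
    · rw [if_pos hke, if_pos (hkl.mp hke)] at hreq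
      split_ifs at hreq <;> linarith
    · rw [if_neg hke, if_neg (fun h => hke (hkl.mpr h))] at hreq
      split_ifs at hreq <;> linarith
  · -- gval
    unfold gvalQ
    simp only [List.length_ofFn]
    have hzero : ∀ k : Fin r,
        (if h : ((Finset.range t).filter
            fun i => ProvidesQ ((CartanD r).map (fun z : ℤ => (z : ℚ))) ℓ
              ((List.ofFn Δ).getD i 0) k).Nonempty
          then (List.ofFn Δ).getD (((Finset.range t).filter
            fun i => ProvidesQ ((CartanD r).map (fun z : ℤ => (z : ℚ))) ℓ
              ((List.ofFn Δ).getD i 0) k).min' h) 0 k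
          else 0) = (0 : ℚ) := by
      intro k
      by_cases hne : ((Finset.range t).filter
          fun i => ProvidesQ ((CartanD r).map (fun z : ℤ => (z : ℚ))) ℓ
            ((List.ofFn Δ).getD i 0) k).Nonempty
      · rw [dif_pos hne]
        have hmem := Finset.min'_mem _ hne
        rw [Finset.mem_filter, Finset.mem_range] at hmem
        obtain ⟨hlt, hprov⟩ := hmem
        set i0 := ((Finset.range t).filter
          fun i => ProvidesQ ((CartanD r).map (fun z : ℤ => (z : ℚ))) ℓ
            ((List.ofFn Δ).getD i 0) k).min' hne with hi0
        rw [ProvidesQ, getD_ofFn' Δ 0 i0 hlt] at hprov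
        have hsum : (∑ j, ((CartanD r).map (fun z : ℤ => (z : ℚ))) k j * Δ ⟨i0, hlt⟩ j)
            = ((CartanD r).map (fun z : ℤ => (z : ℚ))).mulVec (Δ ⟨i0, hlt⟩) k := rfl
        rw [hsum, hΔ ⟨i0, hlt⟩] at hprov
        simp only [eVecQ, Fin.val_mk] at hprov
        have hkl : (k = ℓ) ↔ (k.val + 1 = ℓ.val + 1) := by rw [Fin.ext_iff]; omega
        have hk1 : k.val + 1 = c + 2 * i0 := by
          by_contra hne2
          rw [if_neg hne2] at hprov
          by_cases hke : k = ℓ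
          · rw [if_pos hke, if_pos (hkl.mp hke)] at hprov; linarith
          · rw [if_neg hke, if_neg (fun h => hke (hkl.mpr h))] at hprov; linarith
        rw [getD_ofFn' Δ 0 i0 hlt, hΔeq ⟨i0, hlt⟩]
        unfold deltaD
        rw [if_pos (by omega : k.val + 3 ≤ r)]
        have : min (k.val + 1) (ℓ.val + 1) = min (k.val + 1) (c + 2 * (⟨i0, hlt⟩ : Fin t).val) := by
          simp only [Fin.val_mk]; omega
        rw [this, sub_self]
      · rw [dif_neg hne]
    rw [Finset.sum_congr rfl fun k _ => hzero k, Finset.sum_const, smul_zero, add_zero]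


/-- in type `D_r` (`r ≥ 4`), for `2 ≤ ℓ ≤ r−2` (1-indexed), the vectors `Δ_i`
solving `C·Δ_i = e_ℓ − e_{2(i−1)}` (ℓ even, `e_0 := 0`) resp. `C·Δ_i = e_ℓ − e_{2i−1}` (ℓ odd),
`1 ≤ i ≤ t := ⌊ℓ/2⌋`, lie in `ℕ^r`, are strictly decreasing, form an admissible path-type for
`ℓ`, and `g(Δ_1⋯Δ_t) = t = ⌊ℓ/2⌋`. -/
theorem stmt14 {r : ℕ} (hr : 4 ≤ r) (ℓ : Fin r)
    (h1 : 2 ≤ ℓ.val + 1) (h2 : ℓ.val + 1 ≤ r - 2)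
    (Cq : Matrix (Fin r) (Fin r) ℚ)
    (hCq : Cq = (CartanD r).map (fun z : ℤ => (z : ℚ))) :
    (Even (ℓ.val + 1) →
      ∀ Δ : Fin ((ℓ.val + 1) / 2) → (Fin r → ℚ),
        (∀ i, Cq.mulVec (Δ i) = fun k =>
          (if k = ℓ then 1 else 0) -
            (if i.val ≠ 0 ∧ k.val = 2 * i.val - 1 then 1 else 0)) →
        (∀ i k, ∃ n : ℕ, Δ i k = n) ∧
        IsPathTypeQ (List.ofFn Δ) ∧
        AdmissibleQ Cq ℓ (List.ofFn Δ) ∧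
        gvalQ Cq ℓ (List.ofFn Δ) = (((ℓ.val + 1) / 2 : ℕ) : ℚ)) ∧
    (Odd (ℓ.val + 1) →
      ∀ Δ : Fin (ℓ.val / 2) → (Fin r → ℚ),
        (∀ i, Cq.mulVec (Δ i) = fun k =>
          (if k = ℓ then 1 else 0) - (if k.val = 2 * i.val then 1 else 0)) →
        (∀ i k, ∃ n : ℕ, Δ i k = n) ∧
        IsPathTypeQ (List.ofFn Δ) ∧
        AdmissibleQ Cq ℓ (List.ofFn Δ) ∧
        gvalQ Cq ℓ (List.ofFn Δ) = ((ℓ.val / 2 : ℕ) : ℚ)) := by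
  subst hCq
  constructor
  · intro heven Δ hΔfun
    have hpar : (ℓ.val + 1) % 2 = 0 := by
      obtain ⟨w, hw⟩ := heven; omega
    have hc : 0 + 2 * ((ℓ.val + 1) / 2) = ℓ.val + 1 := by omega
    have hΔ' : ∀ i : Fin ((ℓ.val + 1) / 2),
        ((CartanD r).map (fun z : ℤ => (z : ℚ))).mulVec (Δ i)
          = fun k => (if k.val + 1 = ℓ.val + 1 then 1 else 0)
              - (if k.val + 1 = 0 + 2 * i.val then 1 else 0) := by
      intro i
      rw [hΔfun i]
      funext k
      congr 1
      · exact if_congr (by rw [Fin.ext_iff]; omega) rfl rfl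
      · exact if_congr (by have := i.isLt; omega) rfl rfl
    exact master hr ℓ h1 h2 _ 0 hc (by omega) Δ hΔ'
  · intro hodd Δ hΔfun
    have hpar : ℓ.val % 2 = 0 := by
      obtain ⟨w, hw⟩ := hodd; omega
    have hc : 1 + 2 * (ℓ.val / 2) = ℓ.val + 1 := by omega
    have hΔ' : ∀ i : Fin (ℓ.val / 2),
        ((CartanD r).map (fun z : ℤ => (z : ℚ))).mulVec (Δ i)
          = fun k => (if k.val + 1 = ℓ.val + 1 then 1 else 0)
              - (if k.val + 1 = 1 + 2 * i.val then 1 else 0) := by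
      intro i
      rw [hΔfun i]
      funext k
      congr 1
      · exact if_congr (by rw [Fin.ext_iff]; omega) rfl rfl
      · exact if_congr (by omega) rfl rfl
    exact master hr ℓ h1 h2 _ 1 hc (by omega) Δ hΔ'
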